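/- Let P and P' be centered Borel probability measures on a compact set X ⊂ ℝ (i.e. ∫ x dP = ∫ x dP' = 0), both having all odd moments equal to zero. If ∫ (x^2 + ∫ y^2 dP(y))^k dP(x) = ∫ (x^2 + ∫ y^2 dP'(y))^k dP'(x) for every natural number k, then P = P'. -/

import Mathlib

open MeasureTheory Finset
open scoped ENNReal NNReal

lemma pow_integrable (μ : Measure ℝ) [IsProbabilityMeasure μ] {C : ℝ}
    (hb : ∀ᵐ x ∂μ, |x| ≤ C) (n : ℕ) : Integrable (fun x : ℝ => x ^ n) μ := by
  have hC : 0 ≤ C := by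
    have hex : ∃ x : ℝ, |x| ≤ C := by
      by_contra hcon
      push_neg at hcon
      have h0 : μ Set.univ = 0 := by
        have : ∀ᵐ x ∂μ, False := by
          filter_upwards [hb] with x hx using absurd hx (not_le.2 (hcon x))
        simpa [ae_iff] using this
      simp [measure_univ] at h0
    obtain ⟨x, hx⟩ := hex
    exact le_trans (abs_nonneg x) hx
  refine Integrable.mono' (integrable_const (C ^ n))
    ((measurable_id.pow_const n).aestronglyMeasurable) ?_
  filter_upwards [hb] with x hx
  have : |x ^ n| ≤ C ^ n := by
    rw [abs_pow]
    exact pow_le_pow_left₀ (abs_nonneg x) hx n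
  simpa [Real.norm_eq_abs] using this

lemma expand_moment (μ : Measure ℝ) [IsProbabilityMeasure μ]
    (hint : ∀ n, Integrable (fun x : ℝ => x ^ n) μ) (m : ℝ) (k : ℕ) :
    ∫ x, (x ^ 2 + m) ^ k ∂μ
      = ∑ j ∈ range (k + 1), (∫ x, x ^ (2 * j) ∂μ) * (m ^ (k - j) * (k.choose j : ℝ)) := by
  have hfun : ∀ x : ℝ, (x ^ 2 + m) ^ k
      = ∑ j ∈ range (k + 1), x ^ (2 * j) * (m ^ (k - j) * (k.choose j : ℝ)) := by
    intro x
    rw [add_pow]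
    exact Finset.sum_congr rfl fun j _ => by rw [pow_mul, mul_assoc]
  simp_rw [hfun]
  rw [integral_finset_sum _ (fun j _ => (hint (2 * j)).mul_const _)]
  exact Finset.sum_congr rfl fun j _ => integral_mul_const _ _

/-- Two centered probability measures on a compact set `X ⊂ ℝ` with vanishing odd
moments and equal moments of `x² + E[y²]` are equal. -/
theorem measure_eq_of_even_shifted_moments_eq (X : Set ℝ) (hX : IsCompact X)
    (P P' : Measure ℝ) [IsProbabilityMeasure P] [IsProbabilityMeasure P']
    (hP : P Xᶜ = 0) (hP' : P' Xᶜ = 0)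
    (hcent : ∫ x, x ∂P = 0) (hcent' : ∫ x, x ∂P' = 0)
    (hodd : ∀ j : ℕ, ∫ x, x ^ (2 * j + 1) ∂P = 0)
    (hodd' : ∀ j : ℕ, ∫ x, x ^ (2 * j + 1) ∂P' = 0)
    (h : ∀ k : ℕ,
      ∫ x, (x ^ 2 + ∫ y, y ^ 2 ∂P) ^ k ∂P
        = ∫ x, (x ^ 2 + ∫ y, y ^ 2 ∂P') ^ k ∂P') :
    P = P' := by
  -- a bound for the compact set
  obtain ⟨r, hr⟩ := hX.isBounded.subset_closedBall 0
  set C : ℝ := max r 0 with hCdef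
  have hXC : ∀ x ∈ X, |x| ≤ C := by
    intro x hx
    have := hr hx
    rw [Metric.mem_closedBall, Real.dist_eq, sub_zero] at this
    exact this.trans (le_max_left _ _)
  have hC0 : 0 ≤ C := le_max_right _ _
  have haeX : ∀ᵐ x ∂P, x ∈ X := by
    rw [ae_iff]; exact hP
  have haeX' : ∀ᵐ x ∂P', x ∈ X := by
    rw [ae_iff]; exact hP'
  have hbP : ∀ᵐ x ∂P, |x| ≤ C := haeX.mono fun x hx => hXC x hx
  have hbP' : ∀ᵐ x ∂P', |x| ≤ C := haeX'.mono fun x hx => hXC x hx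
  have hintP : ∀ n, Integrable (fun x : ℝ => x ^ n) P := pow_integrable P hbP
  have hintP' : ∀ n, Integrable (fun x : ℝ => x ^ n) P' := pow_integrable P' hbP'
  set m : ℝ := ∫ y, y ^ 2 ∂P with hm
  set m' : ℝ := ∫ y, y ^ 2 ∂P' with hm'
  -- second moments agree
  have hmm : m = m' := by
    have h1 := h 1
    simp only [pow_one] at h1
    rw [integral_add (hintP 2) (integrable_const m),
        integral_add (hintP' 2) (integrable_const m')] at h1
    simp only [integral_const, measure_univ, probReal_univ, ENNReal.toReal_one, one_smul, smul_eq_mul] at h1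
    rw [← hm, ← hm'] at h1
    linarith
  -- even moments agree
  have heven : ∀ k : ℕ, ∫ x, x ^ (2 * k) ∂P = ∫ x, x ^ (2 * k) ∂P' := by
    intro k
    induction k using Nat.strong_induction_on with
    | _ k ih =>
      have hk := h k
      rw [← hmm] at hk
      rw [expand_moment P hintP m k, expand_moment P' hintP' m k] at hk
      rw [Finset.sum_range_succ, Finset.sum_range_succ] at hk
      have hsum : ∑ j ∈ range k, (∫ x, x ^ (2 * j) ∂P) * (m ^ (k - j) * (k.choose j : ℝ))
          = ∑ j ∈ range k, (∫ x, x ^ (2 * j) ∂P') * (m ^ (k - j) * (k.choose j : ℝ)) :=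
        Finset.sum_congr rfl fun j hj => by rw [ih j (Finset.mem_range.mp hj)]
      rw [hsum] at hk
      have := add_left_cancel hk
      simpa [Nat.sub_self, Nat.choose_self] using this
  -- all moments agree
  have hmom : ∀ n : ℕ, ∫ x, x ^ n ∂P = ∫ x, x ^ n ∂P' := by
    intro n
    rcases Nat.even_or_odd n with he | ho
    · obtain ⟨k, hk⟩ := he
      rw [show n = 2 * k by omega]
      exact heven k
    · obtain ⟨k, hk⟩ := ho
      rw [hk, hodd k, hodd' k]
  -- polynomial integrals agree
  have hpolyint : ∀ (p : Polynomial ℝ) (μ : Measure ℝ), (∀ n, Integrable (fun x : ℝ => x ^ n) μ)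
      → Integrable (fun x : ℝ => p.eval x) μ := by
    intro p μ hint
    have : (fun x : ℝ => p.eval x)
        = fun x => ∑ i ∈ range (p.natDegree + 1), p.coeff i * x ^ i := by
      funext x
      rw [Polynomial.eval_eq_sum_range]
    rw [this]
    exact integrable_finset_sum _ fun i _ => (hint i).const_mul _
  have hpoly : ∀ p : Polynomial ℝ, ∫ x, p.eval x ∂P = ∫ x, p.eval x ∂P' := by
    intro p
    have e : ∀ (μ : Measure ℝ), (∀ n, Integrable (fun x : ℝ => x ^ n) μ) →
        ∫ x, p.eval x ∂μ = ∑ i ∈ range (p.natDegree + 1), p.coeff i * ∫ x, x ^ i ∂μ := by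
      intro μ hint
      have : (fun x : ℝ => p.eval x)
          = fun x => ∑ i ∈ range (p.natDegree + 1), p.coeff i * x ^ i := by
        funext x; rw [Polynomial.eval_eq_sum_range]
      rw [this, integral_finset_sum _ fun i _ => (hint i).const_mul _]
      exact Finset.sum_congr rfl fun i _ => integral_const_mul _ _
    rw [e P hintP, e P' hintP']
    exact Finset.sum_congr rfl fun i _ => by rw [hmom i]
  -- continuous function integrals agree
  have hcont : ∀ g : ℝ → ℝ, Continuous g → Integrable g P → Integrable g P' →
      ∫ x, g x ∂P = ∫ x, g x ∂P' := by
    intro g hg hgP hgP'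
    have key : ∀ ε : ℝ, 0 < ε → |(∫ x, g x ∂P) - ∫ x, g x ∂P'| ≤ 2 * ε := by
      intro ε hε
      obtain ⟨p, hp⟩ := exists_polynomial_near_of_continuousOn (-C) C g hg.continuousOn ε hε
      have hXI : X ⊆ Set.Icc (-C) C := by
        intro x hx
        have := hXC x hx
        constructor <;> [linarith [neg_abs_le x]; linarith [le_abs_self x]]
      have hb1 : ∀ᵐ x ∂P, ‖g x - p.eval x‖ ≤ ε := by
        filter_upwards [haeX] with x hx
        rw [Real.norm_eq_abs, abs_sub_comm]
        exact (hp x (hXI hx)).le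
      have hb2 : ∀ᵐ x ∂P', ‖g x - p.eval x‖ ≤ ε := by
        filter_upwards [haeX'] with x hx
        rw [Real.norm_eq_abs, abs_sub_comm]
        exact (hp x (hXI hx)).le
      have i1 : ‖∫ x, (g x - p.eval x) ∂P‖ ≤ ε * (P Set.univ).toReal :=
        norm_integral_le_of_norm_le_const hb1
      have i2 : ‖∫ x, (g x - p.eval x) ∂P'‖ ≤ ε * (P' Set.univ).toReal :=
        norm_integral_le_of_norm_le_const hb2
      rw [integral_sub hgP (hpolyint p P hintP)] at i1
      rw [integral_sub hgP' (hpolyint p P' hintP')] at i2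
      simp only [measure_univ, ENNReal.toReal_one, mul_one, Real.norm_eq_abs] at i1 i2
      have hpeq := hpoly p
      calc |(∫ x, g x ∂P) - ∫ x, g x ∂P'|
          = |((∫ x, g x ∂P) - ∫ x, p.eval x ∂P)
              + ((∫ x, p.eval x ∂P') - ∫ x, g x ∂P')| := by rw [hpeq]; ring_nf
        _ ≤ |(∫ x, g x ∂P) - ∫ x, p.eval x ∂P| + |(∫ x, p.eval x ∂P') - ∫ x, g x ∂P'| :=
            abs_add_le _ _
        _ ≤ ε + ε := by rw [abs_sub_comm (∫ x, p.eval x ∂P')]; exact add_le_add i1 i2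
        _ = 2 * ε := by ring
    by_contra hne
    have hpos : 0 < |(∫ x, g x ∂P) - ∫ x, g x ∂P'| := by
      rw [abs_pos, sub_ne_zero]; exact hne
    have := key (|(∫ x, g x ∂P) - ∫ x, g x ∂P'| / 4) (by linarith)
    linarith
  -- conclude via bounded continuous ℝ≥0 functions
  refine ext_of_forall_lintegral_eq_of_IsFiniteMeasure fun f => ?_
  set g : ℝ → ℝ := fun x => (f x : ℝ) with hgdef
  have hgc : Continuous g := NNReal.continuous_coe.comp f.continuous
  obtain ⟨D, hD⟩ := f.bounded
  have hgb : ∀ x, ‖g x‖ ≤ D + g 0 := by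
    intro x
    have h1 : dist (f x) (f 0) ≤ D := hD x 0
    rw [NNReal.dist_eq] at h1
    have h2 : (f x : ℝ) ≤ |(f x : ℝ) - (f 0 : ℝ)| + (f 0 : ℝ) := by
      have := abs_sub_abs_le_abs_sub (f x : ℝ) (f 0 : ℝ)
      rw [abs_of_nonneg (f x).coe_nonneg, abs_of_nonneg (f 0).coe_nonneg] at this
      linarith
    have : ‖g x‖ = (f x : ℝ) := by
      rw [Real.norm_eq_abs, abs_of_nonneg (f x).coe_nonneg]
    rw [this]
    simp only [hgdef]
    linarith
  have hgint : ∀ (μ : Measure ℝ), IsProbabilityMeasure μ → Integrable g μ := by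
    intro μ _
    exact Integrable.mono' (integrable_const (D + g 0)) hgc.aestronglyMeasurable
      (Filter.Eventually.of_forall hgb)
  have hgeq : ∫ x, g x ∂P = ∫ x, g x ∂P' :=
    hcont g hgc (hgint P inferInstance) (hgint P' inferInstance)
  have hnn : ∀ (μ : Measure ℝ), 0 ≤ᵐ[μ] g :=
    fun μ => Filter.Eventually.of_forall fun x => (f x).coe_nonneg
  calc ∫⁻ x, (f x : ℝ≥0∞) ∂P = ∫⁻ x, ENNReal.ofReal (g x) ∂P := by
        simp [hgdef, ENNReal.ofReal_coe_nnreal]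
    _ = ENNReal.ofReal (∫ x, g x ∂P) :=
        (ofReal_integral_eq_lintegral_ofReal (hgint P inferInstance) (hnn P)).symm
    _ = ENNReal.ofReal (∫ x, g x ∂P') := by rw [hgeq]
    _ = ∫⁻ x, ENNReal.ofReal (g x) ∂P' :=
        ofReal_integral_eq_lintegral_ofReal (hgint P' inferInstance) (hnn P')
    _ = ∫⁻ x, (f x : ℝ≥0∞) ∂P' := by simp [hgdef, ENNReal.ofReal_coe_nnreal]
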